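/- If an FT3S system is first-order symmetric hyperbolic, then it is FT3S symmetric hyperbolic. Precisely: if for some admissible reduction parameters D^p there is a constant Hermitian positive-definite H1 on W1 with H1 A1^p Hermitian for every p in {1,2,3}, then the diagonal block H22 of H1 corresponding to the variables (d^u_{ij}, d^v_i, w) is an FT3S symmetrizer: H22 is Hermitian, positive definite on W3, and (iota_s* H22 iota_s) P3(s) is Hermitian for every unit vector s in R^3. -/

import Mathlib

open Matrix

/-- Index type for the FT3S state `(u, v, w)`. -/
abbrev I3 (nu nv nw : ℕ) : Type := Fin nu ⊕ (Fin nv ⊕ Fin nw)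

/-- Index type for `W₃`: tuples `(X_{ij}, Y_i, Z)` (tensor indices written out in full;
the space `W₃` consists of the vectors symmetric in the pair `(i,j)`). -/
abbrev I3f (nu nv nw : ℕ) : Type :=
  (Fin 3 × Fin 3 × Fin nu) ⊕ ((Fin 3 × Fin nv) ⊕ Fin nw)

/-- Index type for the first-order state `(u, d^u_i, v, d^u_{ij}, d^v_i, w)`. -/
abbrev I1 (nu nv nw : ℕ) : Type :=
  Fin nu ⊕ ((Fin 3 × Fin nu) ⊕ (Fin nv ⊕ I3f nu nv nw))

/-- Kronecker delta. -/
def kr (a b : Fin 3) : ℂ := if a = b then 1 else 0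

/-- The row/column of `u`. -/
abbrev colU {nu nv nw : ℕ} (m : Fin nu) : I1 nu nv nw := Sum.inl m
/-- The row/column of `d^u_k`. -/
abbrev colDu {nu nv nw : ℕ} (k : Fin 3) (m : Fin nu) : I1 nu nv nw :=
  Sum.inr (Sum.inl (k, m))
/-- The row/column of `v`. -/
abbrev colV {nu nv nw : ℕ} (q : Fin nv) : I1 nu nv nw := Sum.inr (Sum.inr (Sum.inl q))
/-- The row/column of `d^u_{kl}`. -/
abbrev col4 {nu nv nw : ℕ} (k l : Fin 3) (m : Fin nu) : I1 nu nv nw :=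
  Sum.inr (Sum.inr (Sum.inr (Sum.inl (k, l, m))))
/-- The row/column of `d^v_k`. -/
abbrev col5 {nu nv nw : ℕ} (k : Fin 3) (q : Fin nv) : I1 nu nv nw :=
  Sum.inr (Sum.inr (Sum.inr (Sum.inr (Sum.inl (k, q)))))
/-- The row/column of `w`. -/
abbrev col6 {nu nv nw : ℕ} (t : Fin nw) : I1 nu nv nw :=
  Sum.inr (Sum.inr (Sum.inr (Sum.inr (Sum.inr t))))

/-- The embedding of the `(d^u_{ij}, d^v_i, w)` block into the first-order state. -/
abbrev embW {nu nv nw : ℕ} (r : I3f nu nv nw) : I1 nu nv nw := Sum.inr (Sum.inr (Sum.inr r))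

variable {nu nv nw : ℕ}
  (Auu : Fin 3 → Matrix (Fin nu) (Fin nu) ℂ) (Auv : Matrix (Fin nu) (Fin nv) ℂ)
  (Avu : Fin 3 → Fin 3 → Matrix (Fin nv) (Fin nu) ℂ)
  (Avv : Fin 3 → Matrix (Fin nv) (Fin nv) ℂ)
  (Avw : Matrix (Fin nv) (Fin nw) ℂ)
  (Awu : Fin 3 → Fin 3 → Fin 3 → Matrix (Fin nw) (Fin nu) ℂ)
  (Awv : Fin 3 → Fin 3 → Matrix (Fin nw) (Fin nv) ℂ)
  (Aww : Fin 3 → Matrix (Fin nw) (Fin nw) ℂ)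

/-- The FT3S principal symbol `P₃(s)`. -/
noncomputable def P3 (s : Fin 3 → ℝ) : Matrix (I3 nu nv nw) (I3 nu nv nw) ℂ :=
  Matrix.of fun r c =>
    match r, c with
    | Sum.inl m, Sum.inl m' => ∑ i, (s i : ℂ) * Auu i m m'
    | Sum.inl m, Sum.inr (Sum.inl q) => Auv m q
    | Sum.inl _, Sum.inr (Sum.inr _) => 0
    | Sum.inr (Sum.inl p), Sum.inl m' => ∑ i, ∑ j, (s i : ℂ) * (s j : ℂ) * Avu i j p m'
    | Sum.inr (Sum.inl p), Sum.inr (Sum.inl q) => ∑ i, (s i : ℂ) * Avv i p q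
    | Sum.inr (Sum.inl p), Sum.inr (Sum.inr t) => Avw p t
    | Sum.inr (Sum.inr t), Sum.inl m' =>
        ∑ i, ∑ j, ∑ k, (s i : ℂ) * (s j : ℂ) * (s k : ℂ) * Awu i j k t m'
    | Sum.inr (Sum.inr t), Sum.inr (Sum.inl q) =>
        ∑ i, ∑ j, (s i : ℂ) * (s j : ℂ) * Awv i j t q
    | Sum.inr (Sum.inr t), Sum.inr (Sum.inr t') => ∑ i, (s i : ℂ) * Aww i t t'

/-- The map `ι_s : ℂ^{n_u} ⊕ ℂ^{n_v} ⊕ ℂ^{n_w} → W₃`, `ι_s(x,y,z) = (sᵢsⱼx, sᵢy, z)`. -/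
noncomputable def iotaS {nu nv nw : ℕ} (s : Fin 3 → ℝ) :
    Matrix (I3f nu nv nw) (I3 nu nv nw) ℂ :=
  Matrix.of fun r c =>
    match r, c with
    | Sum.inl (i, j, m), Sum.inl m' => (s i : ℂ) * (s j : ℂ) * (if m = m' then 1 else 0)
    | Sum.inr (Sum.inl (i, q)), Sum.inr (Sum.inl q') =>
        (s i : ℂ) * (if q = q' then 1 else 0)
    | Sum.inr (Sum.inr t), Sum.inr (Sum.inr t') => if t = t' then 1 else 0
    | _, _ => 0

/-- The principal matrices `A₀^p` of the direct first-order reduction (without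
the reduction-parameter additions). -/
noncomputable def A0 (p : Fin 3) : Matrix (I1 nu nv nw) (I1 nu nv nw) ℂ :=
  Matrix.of fun r c =>
    match r, c with
    | Sum.inr (Sum.inr (Sum.inr (Sum.inl (i, j, m)))),
        Sum.inr (Sum.inr (Sum.inr (Sum.inl (k, l, m')))) =>
        (4 : ℂ)⁻¹ * (Auu k m m' * (kr l i * kr p j + kr l j * kr p i)
          + Auu l m m' * (kr k i * kr p j + kr k j * kr p i))
    | Sum.inr (Sum.inr (Sum.inr (Sum.inl (i, j, m)))),
        Sum.inr (Sum.inr (Sum.inr (Sum.inr (Sum.inl (k, q))))) =>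
        (2 : ℂ)⁻¹ * (kr p i * kr k j + kr p j * kr k i) * Auv m q
    | Sum.inr (Sum.inr (Sum.inr (Sum.inr (Sum.inl (i, q))))),
        Sum.inr (Sum.inr (Sum.inr (Sum.inl (k, l, m')))) =>
        kr p i * Avu k l q m'
    | Sum.inr (Sum.inr (Sum.inr (Sum.inr (Sum.inl (i, q))))),
        Sum.inr (Sum.inr (Sum.inr (Sum.inr (Sum.inl (k, q'))))) =>
        kr p i * Avv k q q'
    | Sum.inr (Sum.inr (Sum.inr (Sum.inr (Sum.inl (i, q))))),
        Sum.inr (Sum.inr (Sum.inr (Sum.inr (Sum.inr t)))) =>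
        kr p i * Avw q t
    | Sum.inr (Sum.inr (Sum.inr (Sum.inr (Sum.inr t)))),
        Sum.inr (Sum.inr (Sum.inr (Sum.inl (k, l, m')))) =>
        Awu p k l t m'
    | Sum.inr (Sum.inr (Sum.inr (Sum.inr (Sum.inr t)))),
        Sum.inr (Sum.inr (Sum.inr (Sum.inr (Sum.inl (k, q))))) =>
        Awv p k t q
    | Sum.inr (Sum.inr (Sum.inr (Sum.inr (Sum.inr t)))),
        Sum.inr (Sum.inr (Sum.inr (Sum.inr (Sum.inr t')))) =>
        Aww p t t'
    | _, _ => 0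

/-- Admissibility of the reduction parameters `D^p`: arbitrary on the columns over
`(u, d^u_k, v)`; on the column over `d^u_{kl}` symmetric in `(k,l)` with vanishing total
symmetrization over `(p,k,l)`; on the column over `d^v_k` with vanishing symmetrization
over `(p,k)`; zero on the column over `w`; and symmetric in the lower multi-index of each
row. -/
def AdmissibleD {nu nv nw : ℕ} (D : Fin 3 → Matrix (I1 nu nv nw) (I1 nu nv nw) ℂ) : Prop :=
  (∀ p r t, D p r (col6 t) = 0) ∧
  (∀ p r k l m, D p r (col4 k l m) = D p r (col4 l k m)) ∧
  (∀ p r k l m,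
    D p r (col4 k l m) + D p r (col4 l k m) + D k r (col4 l p m) + D k r (col4 p l m)
      + D l r (col4 p k m) + D l r (col4 k p m) = 0) ∧
  (∀ p r k q, D p r (col5 k q) + D k r (col5 p q) = 0) ∧
  (∀ p i j m c, D p (col4 i j m) c = D p (col4 j i m) c)

lemma cube_contract (σ : Fin 3 → ℂ) (f : Fin 3 → Fin 3 → Fin 3 → ℂ)
    (h : ∀ p k l, f p k l + f p l k + f k l p + f k p l + f l p k + f l k p = 0) :
    ∑ i, ∑ j, (∑ p, σ p * f p i j) * (σ i * σ j) = 0 := by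
  simp only [Fin.sum_univ_three]
  linear_combination (σ 0 * σ 0 * σ 0 / 6) * h 0 0 0 + (σ 0 * σ 0 * σ 1 / 6) * h 0 0 1 + (σ 0 * σ 0 * σ 2 / 6) * h 0 0 2 + (σ 0 * σ 1 * σ 0 / 6) * h 0 1 0 + (σ 0 * σ 1 * σ 1 / 6) * h 0 1 1 + (σ 0 * σ 1 * σ 2 / 6) * h 0 1 2 + (σ 0 * σ 2 * σ 0 / 6) * h 0 2 0 + (σ 0 * σ 2 * σ 1 / 6) * h 0 2 1 + (σ 0 * σ 2 * σ 2 / 6) * h 0 2 2 + (σ 1 * σ 0 * σ 0 / 6) * h 1 0 0 + (σ 1 * σ 0 * σ 1 / 6) * h 1 0 1 + (σ 1 * σ 0 * σ 2 / 6) * h 1 0 2 + (σ 1 * σ 1 * σ 0 / 6) * h 1 1 0 + (σ 1 * σ 1 * σ 1 / 6) * h 1 1 1 + (σ 1 * σ 1 * σ 2 / 6) * h 1 1 2 + (σ 1 * σ 2 * σ 0 / 6) * h 1 2 0 + (σ 1 * σ 2 * σ 1 / 6) * h 1 2 1 + (σ 1 * σ 2 * σ 2 / 6) * h 1 2 2 +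 (σ 2 * σ 0 * σ 0 / 6) * h 2 0 0 + (σ 2 * σ 0 * σ 1 / 6) * h 2 0 1 + (σ 2 * σ 0 * σ 2 / 6) * h 2 0 2 + (σ 2 * σ 1 * σ 0 / 6) * h 2 1 0 + (σ 2 * σ 1 * σ 1 / 6) * h 2 1 1 + (σ 2 * σ 1 * σ 2 / 6) * h 2 1 2 + (σ 2 * σ 2 * σ 0 / 6) * h 2 2 0 + (σ 2 * σ 2 * σ 1 / 6) * h 2 2 1 + (σ 2 * σ 2 * σ 2 / 6) * h 2 2 2

lemma square_contract (σ : Fin 3 → ℂ) (f : Fin 3 → Fin 3 → ℂ)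
    (h : ∀ p k, f p k + f k p = 0) :
    ∑ i, (∑ p, σ p * f p i) * σ i = 0 := by
  simp only [Fin.sum_univ_three]
  linear_combination (σ 0 * σ 0 / 2) * h 0 0 + (σ 0 * σ 1 / 2) * h 0 1 + (σ 0 * σ 2 / 2) * h 0 2 + (σ 1 * σ 0 / 2) * h 1 0 + (σ 1 * σ 1 / 2) * h 1 1 + (σ 1 * σ 2 / 2) * h 1 2 + (σ 2 * σ 0 / 2) * h 2 0 + (σ 2 * σ 1 / 2) * h 2 1 + (σ 2 * σ 2 / 2) * h 2 2

section Aux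
set_option synthInstance.maxHeartbeats 1000000

def Emb {nu nv nw : ℕ} : Matrix (I1 nu nv nw) (I3f nu nv nw) ℂ :=
  Matrix.of fun r x => if r = embW x then 1 else 0

noncomputable def Jmat {nu nv nw : ℕ} (s : Fin 3 → ℝ) :
    Matrix (I1 nu nv nw) (I3 nu nv nw) ℂ :=
  Matrix.of fun r c =>
    match r with
    | Sum.inr (Sum.inr (Sum.inr x)) => iotaS s x c
    | _ => 0

lemma emb_mul_iota {nu nv nw : ℕ} (s : Fin 3 → ℝ) :
    (Emb : Matrix (I1 nu nv nw) (I3f nu nv nw) ℂ) * iotaS (nu := nu) (nv := nv) (nw := nw) s = Jmat (nu := nu) (nv := nv) (nw := nw) s := by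
  ext r c
  rw [Matrix.mul_apply]
  rcases r with m | (d | (q | x))
  · simp [Emb, Jmat]
  · simp [Emb, Jmat]
  · simp [Emb, Jmat]
  · simp [Emb, Jmat, ite_mul, Finset.sum_ite_eq]

lemma emb_sand {nu nv nw : ℕ} (H : Matrix (I1 nu nv nw) (I1 nu nv nw) ℂ) :
    (Emb (nu := nu) (nv := nv) (nw := nw))ᴴ * H * Emb (nu := nu) (nv := nv) (nw := nw) = H.submatrix embW embW := by
  ext x y
  rw [Matrix.mul_apply]
  simp [Emb, Matrix.mul_apply, Matrix.conjTranspose_apply, apply_ite (star : ℂ → ℂ),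
    ite_mul, mul_ite, Finset.sum_ite_eq, Finset.sum_ite_eq']

end Aux

lemma Dkill {nu nv nw : ℕ} (D : Fin 3 → Matrix (I1 nu nv nw) (I1 nu nv nw) ℂ)
    (hD : AdmissibleD D) (s : Fin 3 → ℝ) :
    (∑ p, ((s p : ℂ) • D p)) * Jmat (nu := nu) (nv := nv) (nw := nw) s = 0 := by
  ext r c
  rw [Matrix.mul_apply]
  rcases c with m' | (q' | t')
  · simp only [Jmat, iotaS, Fintype.sum_sum_type, Fintype.sum_prod_type,
      Matrix.of_apply, Matrix.zero_apply, Matrix.sum_apply, Matrix.smul_apply,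
      smul_eq_mul, mul_zero, zero_mul, Finset.sum_const_zero, add_zero, zero_add,
      mul_ite, ite_mul, mul_one, Finset.sum_ite_eq, Finset.sum_ite_eq',
      Finset.mem_univ, if_true]
    exact cube_contract (fun p => (s p : ℂ))
      (fun p i j => D p r (col4 i j m')) (fun p k l => hD.2.2.1 p r k l m')
  · simp only [Jmat, iotaS, Fintype.sum_sum_type, Fintype.sum_prod_type,
      Matrix.of_apply, Matrix.zero_apply, Matrix.sum_apply, Matrix.smul_apply,
      smul_eq_mul, mul_zero, zero_mul, Finset.sum_const_zero, add_zero, zero_add,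
      mul_ite, ite_mul, mul_one, Finset.sum_ite_eq, Finset.sum_ite_eq',
      Finset.mem_univ, if_true]
    exact square_contract (fun p => (s p : ℂ))
      (fun p i => D p r (col5 i q')) (fun p k => hD.2.2.2.1 p r k q')
  · simp only [Jmat, iotaS, Fintype.sum_sum_type, Fintype.sum_prod_type,
      Matrix.of_apply, Matrix.zero_apply, Matrix.sum_apply, Matrix.smul_apply,
      smul_eq_mul, mul_zero, zero_mul, Finset.sum_const_zero, add_zero, zero_add,
      mul_ite, ite_mul, mul_one, Finset.sum_ite_eq, Finset.sum_ite_eq',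
      Finset.mem_univ, if_true]
    simp [hD.1]

set_option maxHeartbeats 4000000 in
lemma A0key {nu nv nw : ℕ}
    (Auu : Fin 3 → Matrix (Fin nu) (Fin nu) ℂ) (Auv : Matrix (Fin nu) (Fin nv) ℂ)
    (Avu : Fin 3 → Fin 3 → Matrix (Fin nv) (Fin nu) ℂ)
    (Avv : Fin 3 → Matrix (Fin nv) (Fin nv) ℂ)
    (Avw : Matrix (Fin nv) (Fin nw) ℂ)
    (Awu : Fin 3 → Fin 3 → Fin 3 → Matrix (Fin nw) (Fin nu) ℂ)
    (Awv : Fin 3 → Fin 3 → Matrix (Fin nw) (Fin nv) ℂ)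
    (Aww : Fin 3 → Matrix (Fin nw) (Fin nw) ℂ) (s : Fin 3 → ℝ) :
    (∑ p, ((s p : ℂ) • A0 Auu Auv Avu Avv Avw Awu Awv Aww p)) * Jmat (nu := nu) (nv := nv) (nw := nw) s
      = Jmat (nu := nu) (nv := nv) (nw := nw) s * P3 Auu Auv Avu Avv Avw Awu Awv Aww s := by
  ext r c
  rw [Matrix.mul_apply, Matrix.mul_apply]
  rcases r with m | (d | (q | (⟨i, j, m⟩ | (⟨i, q⟩ | t)))) <;>
    rcases c with m' | (q' | t') <;>
    simp only [A0, Jmat, iotaS, P3, Matrix.of_apply, Matrix.sum_apply, Matrix.smul_apply,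
      smul_eq_mul, Fintype.sum_sum_type, Fintype.sum_prod_type, mul_zero, zero_mul,
      Finset.sum_const_zero, add_zero, zero_add, mul_ite, ite_mul, mul_one, one_mul,
      Finset.sum_ite_eq, Finset.sum_ite_eq', Finset.mem_univ, if_true] <;>
    (try simp only [kr, mul_ite, ite_mul, mul_zero, zero_mul, mul_one, one_mul, mul_add,
      add_mul, Finset.sum_add_distrib, Finset.sum_ite_eq, Finset.sum_ite_eq',
      Finset.mem_univ, if_true, Finset.mul_sum, Finset.sum_mul, Finset.sum_ite_irrel,
      Finset.sum_const_zero]) <;>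
    (try simp only [Fin.sum_univ_three]) <;>
    (try ring)


set_option synthInstance.maxHeartbeats 1000000
set_option maxHeartbeats 1000000

/-- first-order symmetric hyperbolicity implies FT3S symmetric
hyperbolicity: if `H₁` is a Hermitian symmetrizer, positive definite on `W₁`, of a direct
first-order reduction `A₁^p = A₀^p + D^p`, then its diagonal block `H₂₂` over
`(d^u_{ij}, d^v_i, w)` is an FT3S symmetrizer. -/
theorem stmt_2
    (D : Fin 3 → Matrix (I1 nu nv nw) (I1 nu nv nw) ℂ) (hD : AdmissibleD D)
    (H1 : Matrix (I1 nu nv nw) (I1 nu nv nw) ℂ)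
    (hH1herm : H1.IsHermitian)
    (hH1pos : ∀ x : I1 nu nv nw → ℂ,
      (∀ i j m, x (col4 i j m) = x (col4 j i m)) → x ≠ 0 →
      0 < (star x ⬝ᵥ (H1 *ᵥ x)).re)
    (hHA : ∀ p, (H1 * (A0 Auu Auv Avu Avv Avw Awu Awv Aww p + D p)).IsHermitian) :
    (H1.submatrix (embW (nu := nu) (nv := nv) (nw := nw)) embW).IsHermitian ∧
    (∀ y : I3f nu nv nw → ℂ,
      (∀ i j m, y (Sum.inl (i, j, m)) = y (Sum.inl (j, i, m))) → y ≠ 0 →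
      0 < (star y ⬝ᵥ ((H1.submatrix embW embW) *ᵥ y)).re) ∧
    (∀ s : Fin 3 → ℝ, (∑ i, s i ^ 2) = 1 →
      ((iotaS (nu := nu) (nv := nv) (nw := nw) s)ᴴ * H1.submatrix embW embW * iotaS s *
        P3 Auu Auv Avu Avv Avw Awu Awv Aww s).IsHermitian) := by
  refine ⟨hH1herm.submatrix embW, ?_, ?_⟩
  · intro y hsym hy
    set x : I1 nu nv nw → ℂ := Sum.elim 0 (Sum.elim 0 (Sum.elim 0 y)) with hx
    have hxs : ∀ i j m, x (col4 i j m) = x (col4 j i m) := fun i j m => hsym i j m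
    have hxne : x ≠ 0 := by
      obtain ⟨r, hr⟩ := Function.ne_iff.mp hy
      intro h
      exact hr (by simpa [hx] using congrFun h (embW r))
    have hpos := hH1pos x hxs hxne
    have hdot : star y ⬝ᵥ (H1.submatrix embW embW *ᵥ y) = star x ⬝ᵥ (H1 *ᵥ x) := by
      simp [hx, dotProduct, Matrix.mulVec, Fintype.sum_sum_type,
        Matrix.submatrix_apply]
    rw [hdot]; exact hpos
  · intro s _
    have key : (∑ p, ((s p : ℂ) • (A0 Auu Auv Avu Avv Avw Awu Awv Aww p + D p))) * Jmat (nu := nu) (nv := nv) (nw := nw) s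
        = Jmat (nu := nu) (nv := nv) (nw := nw) s * P3 Auu Auv Avu Avv Avw Awu Awv Aww s := by
      have hsplit : (∑ p, ((s p : ℂ) • (A0 Auu Auv Avu Avv Avw Awu Awv Aww p + D p)))
          = (∑ p, ((s p : ℂ) • A0 Auu Auv Avu Avv Avw Awu Awv Aww p))
            + (∑ p, ((s p : ℂ) • D p)) := by
        rw [← Finset.sum_add_distrib]
        exact Finset.sum_congr rfl fun p _ => smul_add _ _ _
      rw [hsplit, Matrix.add_mul, Dkill D hD s, add_zero, A0key]
    have hBH : (H1 * (∑ p, ((s p : ℂ) •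
        (A0 Auu Auv Avu Avv Avw Awu Awv Aww p + D p)))).IsHermitian := by
      rw [Finset.mul_sum]
      simp only [Matrix.mul_smul]
      show (∑ p, _)ᴴ = _
      rw [Matrix.conjTranspose_sum]
      refine Finset.sum_congr rfl fun p _ => ?_
      rw [Matrix.conjTranspose_smul, (hHA p).eq]
      simp
    have e1 : (iotaS (nu := nu) (nv := nv) (nw := nw) s)ᴴ * H1.submatrix embW embW * iotaS s *
          P3 Auu Auv Avu Avv Avw Awu Awv Aww s
        = (Jmat (nu := nu) (nv := nv) (nw := nw) s)ᴴ * H1 *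
            (Jmat (nu := nu) (nv := nv) (nw := nw) s * P3 Auu Auv Avu Avv Avw Awu Awv Aww s) := by
      rw [← emb_sand H1, ← emb_mul_iota (nu := nu) (nv := nv) (nw := nw) s,
        Matrix.conjTranspose_mul]
      change (iotaS (nu := nu) (nv := nv) (nw := nw) s)ᴴ * ((Emb (nu := nu) (nv := nv) (nw := nw))ᴴ * H1 * Emb (nu := nu) (nv := nv) (nw := nw)) * iotaS (nu := nu) (nv := nv) (nw := nw) s *
        P3 Auu Auv Avu Avv Avw Awu Awv Aww s = _
      simp only [Matrix.mul_assoc]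
    rw [e1, ← key]
    have e2 : (Jmat (nu := nu) (nv := nv) (nw := nw) s)ᴴ * H1 *
          ((∑ p, ((s p : ℂ) • (A0 Auu Auv Avu Avv Avw Awu Awv Aww p + D p))) * Jmat (nu := nu) (nv := nv) (nw := nw) s)
        = (Jmat (nu := nu) (nv := nv) (nw := nw) s)ᴴ * (H1 * ∑ p, ((s p : ℂ) •
            (A0 Auu Auv Avu Avv Avw Awu Awv Aww p + D p))) * Jmat (nu := nu) (nv := nv) (nw := nw) s := by
      simp only [Matrix.mul_assoc]
    rw [e2]
    exact Matrix.isHermitian_conjTranspose_mul_mul _ hBH
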